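/- arXiv:1312.4227 — 2 statements merged into one kernel-verified Lean document; each statement's English description precedes it below -/
import Mathlib

section
/- Monotonicity with respect to first-order stochastic dominance: under the benchmark setup, let φ_a and φ_b be two cash-flow densities (each continuous and positive exactly on an open interval) with CDFs F_a, F_b satisfying F_a(t) ≥ F_b(t) for all t ∈ ℝ, and assume both portfolio-value integrals are finite. Then V(φ_a) ≤ V(φ_b). -/
open MeasureTheory Set Filter ENNReal Topology

/-- The cumulative distribution function of a density `φ` (w.r.t. Lebesgue measure). -/
noncomputable def cdfOf (φ : ℝ → ℝ) (x : ℝ) : ℝ := ∫ t in Set.Iic x, φ t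

lemma exists_unit_frac_lt {ε : ℝ} (hε : 0 < ε) : ∃ n : ℕ, 1 / (n + 1 : ℝ) < ε := by
  obtain ⟨n, hn⟩ := exists_nat_gt (1 / ε)
  refine ⟨n, ?_⟩
  rw [div_lt_iff₀ (by positivity)]
  rw [div_lt_iff₀ hε] at hn
  nlinarith [hε.le]


section Aux
variable {φ : ℝ → ℝ} {I : Set ℝ}

lemma cdf_mono (hnn : ∀ x, 0 ≤ φ x) (hi : Integrable φ) : Monotone (cdfOf φ) := by
  intro s t hst
  exact setIntegral_mono_set hi.integrableOn
    (Eventually.of_forall hnn) (HasSubset.Subset.eventuallyLE (Iic_subset_Iic.2 hst))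

lemma cdf_nonneg (hnn : ∀ x, 0 ≤ φ x) (t : ℝ) : 0 ≤ cdfOf φ t :=
  setIntegral_nonneg measurableSet_Iic fun x _ => hnn x

lemma cdf_le_total (hnn : ∀ x, 0 ≤ φ x) (hi : Integrable φ) (t : ℝ) :
    cdfOf φ t ≤ ∫ x, φ x :=
  setIntegral_le_integral hi (Eventually.of_forall hnn)

lemma mu_Iic (hnn : ∀ x, 0 ≤ φ x) (hi : Integrable φ) (t : ℝ) :
    (volume.withDensity fun x => ENNReal.ofReal (φ x)) (Iic t)
      = ENNReal.ofReal (cdfOf φ t) := by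
  rw [withDensity_apply _ measurableSet_Iic,
    ← ofReal_integral_eq_lintegral_ofReal hi.integrableOn (Eventually.of_forall hnn)]
  rfl

lemma mu_univ (hnn : ∀ x, 0 ≤ φ x) (hi : Integrable φ) :
    (volume.withDensity fun x => ENNReal.ofReal (φ x)) univ
      = ENNReal.ofReal (∫ x, φ x) := by
  rw [withDensity_apply _ MeasurableSet.univ, Measure.restrict_univ,
    ← ofReal_integral_eq_lintegral_ofReal hi (Eventually.of_forall hnn)]

lemma mu_compl (hc : Continuous φ) (hpos : ∀ x, 0 < φ x ↔ x ∈ I) (hnn : ∀ x, 0 ≤ φ x)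
    (hIm : MeasurableSet I) :
    (volume.withDensity fun x => ENNReal.ofReal (φ x)) Iᶜ = 0 := by
  rw [withDensity_apply _ hIm.compl]
  have : ∀ x ∈ Iᶜ, ENNReal.ofReal (φ x) = 0 := by
    intro x hx
    have : φ x ≤ 0 := by
      by_contra h
      exact hx ((hpos x).1 (lt_of_not_ge h))
    simpa [ENNReal.ofReal_eq_zero]
  calc ∫⁻ x in Iᶜ, ENNReal.ofReal (φ x) = ∫⁻ _ in Iᶜ, 0 := by
        apply setLIntegral_congr_fun hIm.compl (fun x hx => this x hx)
    _ = 0 := lintegral_zero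
variable {φ : ℝ → ℝ} {I : Set ℝ}

lemma cdf_core (hc : Continuous φ) (hi : Integrable φ)
    (hpos : ∀ x, 0 < φ x ↔ x ∈ I) {x y : ℝ} (hxy : x < y) (hsub : Ioo x y ⊆ I) :
    cdfOf φ x < cdfOf φ y := by
  have h1 : cdfOf φ y - cdfOf φ x = ∫ t in x..y, φ t :=
    intervalIntegral.integral_Iic_sub_Iic hi.integrableOn hi.integrableOn
  have h2 : 0 < ∫ t in x..y, φ t := by
    apply intervalIntegral.intervalIntegral_pos_of_pos_on hi.intervalIntegrable
    · intro z hz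
      exact (hpos z).2 (hsub hz)
    · exact hxy
  linarith

lemma cdf_lt_right (hc : Continuous φ) (hi : Integrable φ) (hnn : ∀ x, 0 ≤ φ x)
    (hIo : IsOpen I) (hpos : ∀ x, 0 < φ x ↔ x ∈ I) {x t : ℝ}
    (hx : x ∈ I) (hxt : x < t) : cdfOf φ x < cdfOf φ t := by
  obtain ⟨ε, hε, hball⟩ := Metric.isOpen_iff.1 hIo x hx
  have hsub : Ioo (x - ε) (x + ε) ⊆ I := by
    intro z hz; apply hball; rw [Real.ball_eq_Ioo]; exact hz
  have h1 : cdfOf φ x < cdfOf φ (min (x + ε) t) := by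
    apply cdf_core hc hi hpos (lt_min (by linarith) hxt)
    intro z hz
    exact hsub ⟨by linarith [hz.1], lt_of_lt_of_le hz.2 (min_le_left _ _)⟩
  exact lt_of_lt_of_le h1 (cdf_mono hnn hi (min_le_right _ _))

lemma cdf_lt_left (hc : Continuous φ) (hi : Integrable φ) (hnn : ∀ x, 0 ≤ φ x)
    (hIo : IsOpen I) (hpos : ∀ x, 0 < φ x ↔ x ∈ I) {x t : ℝ}
    (hx : x ∈ I) (htx : t < x) : cdfOf φ t < cdfOf φ x := by
  obtain ⟨ε, hε, hball⟩ := Metric.isOpen_iff.1 hIo x hx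
  have hsub : Ioo (x - ε) (x + ε) ⊆ I := by
    intro z hz; apply hball; rw [Real.ball_eq_Ioo]; exact hz
  have h1 : cdfOf φ (max (x - ε) t) < cdfOf φ x := by
    apply cdf_core hc hi hpos (max_lt (by linarith) htx)
    intro z hz
    exact hsub ⟨lt_of_le_of_lt (le_max_left _ _) hz.1, by linarith [hz.2]⟩
  exact lt_of_le_of_lt (cdf_mono hnn hi (le_max_right _ _)) h1

/-- key iff: for `x ∈ I`, `x < t ↔ F x < F t`. -/
lemma cdf_lt_iff_right (hc : Continuous φ) (hi : Integrable φ) (hnn : ∀ x, 0 ≤ φ x)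
    (hIo : IsOpen I) (hpos : ∀ x, 0 < φ x ↔ x ∈ I) {x t : ℝ} (hx : x ∈ I) :
    x < t ↔ cdfOf φ x < cdfOf φ t := by
  constructor
  · exact cdf_lt_right hc hi hnn hIo hpos hx
  · intro h
    by_contra hle
    exact absurd (cdf_mono hnn hi (le_of_not_gt hle)) (not_le.2 h)

lemma cdf_lt_iff_left (hc : Continuous φ) (hi : Integrable φ) (hnn : ∀ x, 0 ≤ φ x)
    (hIo : IsOpen I) (hpos : ∀ x, 0 < φ x ↔ x ∈ I) {x t : ℝ} (hx : x ∈ I) :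
    t < x ↔ cdfOf φ t < cdfOf φ x := by
  constructor
  · exact fun h => cdf_lt_left hc hi hnn hIo hpos hx h
  · intro h
    by_contra hle
    exact absurd (cdf_mono hnn hi (le_of_not_gt hle)) (not_le.2 h)

/-- Quantile property: the sub-level set of the CDF at level `c ∈ (0,1)` has mass `c`. -/
lemma quantile (hnn : ∀ x, 0 ≤ φ x) (hi : Integrable φ) (h1 : ∫ x, φ x = 1)
    {c : ℝ} (hc0 : 0 < c) (hc1 : c < 1) :
    (volume.withDensity fun x => ENNReal.ofReal (φ x)) {x | cdfOf φ x ≤ c}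
      = ENNReal.ofReal c := by
  set μ := volume.withDensity fun x => ENNReal.ofReal (φ x) with hμ
  have hμuniv : μ univ = 1 := by rw [mu_univ hnn hi, h1, ENNReal.ofReal_one]
  have hfin : ∀ s : Set ℝ, μ s ≠ ∞ := fun s =>
    ne_top_of_le_ne_top (by rw [hμuniv]; exact one_ne_top) (measure_mono (subset_univ s))
  set S := {x | cdfOf φ x ≤ c} with hS
  -- S is nonempty
  have hlow : ∃ x : ℝ, cdfOf φ x < c := by
    have htend : Tendsto (fun n : ℕ => μ (Iic (-(n : ℝ)))) atTop (𝓝 (μ (⋂ n : ℕ, Iic (-(n : ℝ))))) := by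
      apply tendsto_measure_iInter_atTop
      · exact fun n => measurableSet_Iic.nullMeasurableSet
      · intro m n hmn
        exact Iic_subset_Iic.2 (by exact_mod_cast neg_le_neg (by exact_mod_cast hmn))
      · exact ⟨0, hfin _⟩
    have hempty : (⋂ n : ℕ, Iic (-(n : ℝ))) = ∅ := by
      ext x
      simp only [mem_iInter, mem_Iic, mem_empty_iff_false, iff_false, not_forall, not_le]
      obtain ⟨n, hn⟩ := exists_nat_gt (-x)
      exact ⟨n, by linarith⟩
    rw [hempty, measure_empty] at htend
    have := htend.eventually_lt_const (by simpa using hc0 : (0:ℝ≥0∞) < ENNReal.ofReal c)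
    obtain ⟨n, hn⟩ := this.exists
    refine ⟨-(n : ℝ), ?_⟩
    rw [mu_Iic hnn hi] at hn
    exact (ENNReal.ofReal_lt_ofReal_iff hc0).1 hn
  have hup : ∃ y : ℝ, c < cdfOf φ y := by
    have htend : Tendsto (fun n : ℕ => μ (Iic (n : ℝ))) atTop (𝓝 (μ (⋃ n : ℕ, Iic (n : ℝ)))) := by
      apply tendsto_measure_iUnion_atTop
      intro m n hmn
      exact Iic_subset_Iic.2 (by exact_mod_cast hmn)
    have huniv : (⋃ n : ℕ, Iic (n : ℝ)) = univ := by
      ext x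
      simp only [mem_iUnion, mem_Iic, mem_univ, iff_true]
      obtain ⟨n, hn⟩ := exists_nat_gt x
      exact ⟨n, hn.le⟩
    rw [huniv, hμuniv] at htend
    have := htend.eventually_const_lt (by
      rw [← ENNReal.ofReal_one]
      exact (ENNReal.ofReal_lt_ofReal_iff one_pos).2 hc1)
    obtain ⟨n, hn⟩ := this.exists
    refine ⟨(n : ℝ), ?_⟩
    rw [mu_Iic hnn hi] at hn
    exact (ENNReal.ofReal_lt_ofReal_iff_of_nonneg hc0.le).1 hn
  obtain ⟨x₀, hx₀⟩ := hlow
  obtain ⟨y₀, hy₀⟩ := hup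
  have hSne : S.Nonempty := ⟨x₀, hx₀.le⟩
  have hSbdd : BddAbove S := by
    refine ⟨y₀, fun z hz => ?_⟩
    by_contra h
    push_neg at h
    exact absurd (cdf_mono hnn hi h.le) (not_le.2 (lt_of_le_of_lt hz hy₀))
  set s := sSup S with hs
  have hIio : Iio s ⊆ S := by
    intro x hx
    obtain ⟨y, hyS, hxy⟩ := exists_lt_of_lt_csSup hSne hx
    exact le_trans (cdf_mono hnn hi hxy.le) hyS
  have hSIic : S ⊆ Iic s := fun z hz => le_csSup hSbdd hz
  have hsing : μ {s} = 0 := by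
    rw [hμ, withDensity_apply _ (measurableSet_singleton s)]
    exact setLIntegral_measure_zero _ _ (Real.volume_singleton)
  have hIioIic : μ (Iio s) = μ (Iic s) := by
    have : Iic s = Iio s ∪ {s} := by
      ext z; simp [le_iff_lt_or_eq]
    rw [this]
    refine le_antisymm (measure_mono subset_union_left) ?_
    calc μ (Iio s ∪ {s}) ≤ μ (Iio s) + μ {s} := measure_union_le _ _
      _ = μ (Iio s) := by rw [hsing, add_zero]
  -- μ (Iio s) ≤ ofReal c
  have hle : μ (Iio s) ≤ ENNReal.ofReal c := by
    have htend : Tendsto (fun n : ℕ => μ (Iic (s - 1 / (n + 1)))) atTop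
        (𝓝 (μ (⋃ n : ℕ, Iic (s - 1 / (n + 1))))) := by
      apply tendsto_measure_iUnion_atTop
      intro m n hmn
      apply Iic_subset_Iic.2
      have : (1 : ℝ) / (n + 1) ≤ 1 / (m + 1) := by
        apply one_div_le_one_div_of_le (by positivity)
        exact_mod_cast Nat.add_le_add_right hmn 1
      linarith
    have hun : (⋃ n : ℕ, Iic (s - 1 / (n + 1))) = Iio s := by
      ext x
      simp only [mem_iUnion, mem_Iic, mem_Iio]
      constructor
      · rintro ⟨n, hn⟩
        have : (0:ℝ) < 1 / (n + 1) := by positivity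
        linarith
      · intro hx
        obtain ⟨n, hn⟩ := exists_unit_frac_lt (show (0:ℝ) < s - x by linarith)
        exact ⟨n, by linarith⟩
    rw [hun] at htend
    refine le_of_tendsto htend (Eventually.of_forall fun n => ?_)
    rw [mu_Iic hnn hi]
    apply ENNReal.ofReal_le_ofReal
    have hmem : s - 1 / (n + 1) ∈ S := hIio (by
      have : (0:ℝ) < 1 / (n + 1) := by positivity
      simp only [mem_Iio]; linarith)
    exact hmem
  have hge : ENNReal.ofReal c ≤ μ (Iic s) := by
    have htend : Tendsto (fun n : ℕ => μ (Iic (s + 1 / (n + 1)))) atTop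
        (𝓝 (μ (⋂ n : ℕ, Iic (s + 1 / (n + 1))))) := by
      apply tendsto_measure_iInter_atTop
      · exact fun n => measurableSet_Iic.nullMeasurableSet
      · intro m n hmn
        apply Iic_subset_Iic.2
        have : (1 : ℝ) / (n + 1) ≤ 1 / (m + 1) := by
          apply one_div_le_one_div_of_le (by positivity)
          exact_mod_cast Nat.add_le_add_right hmn 1
        linarith
      · exact ⟨0, hfin _⟩
    have hin : (⋂ n : ℕ, Iic (s + 1 / (n + 1))) = Iic s := by
      ext x
      simp only [mem_iInter, mem_Iic]
      constructor
      · intro h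
        by_contra hx
        push_neg at hx
        obtain ⟨n, hn⟩ := exists_unit_frac_lt (show (0:ℝ) < x - s by linarith)
        exact absurd (h n) (by push_neg; linarith)
      · intro h n
        have : (0:ℝ) < 1 / (n + 1) := by positivity
        linarith
    rw [hin] at htend
    refine ge_of_tendsto htend (Eventually.of_forall fun n => ?_)
    rw [mu_Iic hnn hi]
    apply ENNReal.ofReal_le_ofReal
    have hnotS : s + 1 / (n + 1) ∉ S := by
      intro hmem
      have : s + 1 / (n + 1) ≤ s := le_csSup hSbdd hmem
      have hpos : (0:ℝ) < 1 / (n + 1) := by positivity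
      linarith
    simp only [hS, mem_setOf_eq, not_le] at hnotS
    exact hnotS.le
  have h2 : μ S = μ (Iic s) :=
    le_antisymm (measure_mono hSIic) (by rw [← hIioIic]; exact measure_mono hIio)
  rw [h2]
  exact le_antisymm (by rw [← hIioIic]; exact hle) hge
end Aux

lemma exists_measurable_ext {K : ℝ → ℝ} {I : Set ℝ} (hmono : MonotoneOn K I)
    (hconn : I.OrdConnected) (hImeas : MeasurableSet I) :
    ∃ g : ℝ → ℝ, Measurable g ∧ EqOn K g I := by
  classical
  refine ⟨I.piecewise K 0, ?_, fun x hx => (Set.piecewise_eq_of_mem I _ _ hx).symm⟩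
  apply measurable_of_Iic
  intro t
  have hIm : MeasurableSet ({x ∈ I | K x ≤ t}) := by
    apply Set.OrdConnected.measurableSet
    constructor
    intro x hx y hy z hz
    refine ⟨hconn.out hx.1 hy.1 hz, le_trans (hmono (hconn.out hx.1 hy.1 hz) hy.1 hz.2) hy.2⟩
  have : I.piecewise K 0 ⁻¹' Iic t
      = {x ∈ I | K x ≤ t} ∪ (if (0:ℝ) ≤ t then Iᶜ else ∅) := by
    ext x
    by_cases hx : x ∈ I <;>
      simp [Set.piecewise, hx, Pi.zero_apply] <;> split_ifs with h <;> simp [hx, h]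
  rw [this]
  refine hIm.union ?_
  split_ifs with h
  · exact hImeas.compl
  · exact MeasurableSet.empty

lemma measure_eq_inter {μ : Measure ℝ} {I : Set ℝ} (hcompl : μ Iᶜ = 0) (E : Set ℝ) :
    μ E = μ (E ∩ I) := by
  refine le_antisymm ?_ (measure_mono inter_subset_left)
  calc μ E ≤ μ ((E ∩ I) ∪ Iᶜ) := measure_mono (fun x hx => by
        by_cases h : x ∈ I
        · exact Or.inl ⟨hx, h⟩
        · exact Or.inr h)
    _ ≤ μ (E ∩ I) + μ Iᶜ := measure_union_le _ _
    _ = μ (E ∩ I) := by rw [hcompl, add_zero]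



section Map
variable {φ₂ φ : ℝ → ℝ} {I₂ I : Set ℝ} {K : ℝ → ℝ}

/-- The pushforward of the measure with density `φ` under (a measurable version of) the
binding map `K` is the measure with density `φ₂`. -/
lemma map_eq
    (hφ₂c : Continuous φ₂) (hφ₂nn : ∀ x, 0 ≤ φ₂ x)
    (hφ₂i : Integrable φ₂) (hφ₂1 : ∫ x, φ₂ x = 1)
    (hI₂o : IsOpen I₂) (hI₂conn : I₂.OrdConnected)
    (hpos₂ : ∀ x, 0 < φ₂ x ↔ x ∈ I₂)
    (hφc : Continuous φ) (hφnn : ∀ x, 0 ≤ φ x)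
    (hφi : Integrable φ) (hφ1 : ∫ x, φ x = 1)
    (hIo : IsOpen I) (hIconn : I.OrdConnected)
    (hpos : ∀ x, 0 < φ x ↔ x ∈ I)
    (hK : ∀ x ∈ I, K x ∈ I₂ ∧ cdfOf φ₂ (K x) = cdfOf φ x)
    {g : ℝ → ℝ} (hg : Measurable g) (hgK : EqOn K g I) :
    (volume.withDensity fun x => ENNReal.ofReal (φ x)).map g
      = volume.withDensity fun y => ENNReal.ofReal (φ₂ y) := by
  set μ := volume.withDensity fun x => ENNReal.ofReal (φ x) with hμdef
  set μ2 := volume.withDensity fun y => ENNReal.ofReal (φ₂ y) with hμ2def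
  have hcompl : μ Iᶜ = 0 := mu_compl hφc hpos hφnn hIo.measurableSet
  have hμuniv : μ univ = 1 := by rw [hμdef, mu_univ hφnn hφi, hφ1, ENNReal.ofReal_one]
  haveI : IsProbabilityMeasure μ := ⟨hμuniv⟩
  haveI : IsProbabilityMeasure (μ.map g) := Measure.isProbabilityMeasure_map hg.aemeasurable
  apply MeasureTheory.Measure.ext_of_Iic
  intro y
  rw [Measure.map_apply hg measurableSet_Iic]
  have hbase : μ (g ⁻¹' Iic y) = μ (g ⁻¹' Iic y ∩ I) := measure_eq_inter hcompl _
  have hset : g ⁻¹' Iic y ∩ I = {x | x ∈ I ∧ K x ≤ y} := by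
    ext x
    constructor
    · rintro ⟨hxy, hxI⟩
      exact ⟨hxI, by rw [hgK hxI]; exact hxy⟩
    · rintro ⟨hxI, hxy⟩
      refine ⟨?_, hxI⟩
      show g x ∈ Iic y
      rw [← hgK hxI]
      exact hxy
  by_cases hyI : y ∈ I₂
  · -- main case
    have hF2y0 : 0 < cdfOf φ₂ y := by
      obtain ⟨ε, hε, hball⟩ := Metric.isOpen_iff.1 hI₂o y hyI
      have h1 : cdfOf φ₂ (y - ε/2) < cdfOf φ₂ y :=
        cdf_lt_left hφ₂c hφ₂i hφ₂nn hI₂o hpos₂ hyI (by linarith)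
      exact lt_of_le_of_lt (cdf_nonneg hφ₂nn _) h1
    have hF2y1 : cdfOf φ₂ y < 1 := by
      have h1 : cdfOf φ₂ y < cdfOf φ₂ (y + 1) := by
        apply cdf_lt_right hφ₂c hφ₂i hφ₂nn hI₂o hpos₂ hyI (by linarith)
      calc cdfOf φ₂ y < cdfOf φ₂ (y+1) := h1
        _ ≤ ∫ x, φ₂ x := cdf_le_total hφ₂nn hφ₂i _
        _ = 1 := hφ₂1
    have hset2 : {x | x ∈ I ∧ K x ≤ y} = {x | cdfOf φ x ≤ cdfOf φ₂ y} ∩ I := by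
      ext x
      simp only [mem_setOf_eq, mem_inter_iff]
      constructor
      · rintro ⟨hxI, hxy⟩
        refine ⟨?_, hxI⟩
        rw [← (hK x hxI).2]
        exact cdf_mono hφ₂nn hφ₂i hxy
      · rintro ⟨hle, hxI⟩
        refine ⟨hxI, ?_⟩
        by_contra h
        push_neg at h
        have := cdf_lt_left hφ₂c hφ₂i hφ₂nn hI₂o hpos₂ (hK x hxI).1 h
        rw [(hK x hxI).2] at this
        exact absurd hle (not_le.2 this)
    rw [hbase, hset, hset2, ← measure_eq_inter hcompl,
      quantile hφnn hφi hφ1 hF2y0 hF2y1, hμ2def, mu_Iic hφ₂nn hφ₂i]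
  · -- y outside I₂: below or above
    have hdich : (∀ z ∈ I₂, y < z) ∨ (∀ z ∈ I₂, z < y) := by
      by_contra h
      push_neg at h
      obtain ⟨⟨z₁, hz₁, hz₁y⟩, ⟨z₂, hz₂, hyz₂⟩⟩ := h
      exact hyI (hI₂conn.out hz₁ hz₂ ⟨hz₁y, hyz₂⟩)
    rcases hdich with hlow | hhigh
    · -- y below I₂ : both sides are 0
      have h0 : {x | x ∈ I ∧ K x ≤ y} = ∅ := by
        ext x
        simp only [mem_setOf_eq, mem_empty_iff_false, iff_false, not_and, not_le]
        intro hxI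
        exact hlow _ (hK x hxI).1
      rw [hbase, hset, h0, measure_empty, hμ2def, mu_Iic hφ₂nn hφ₂i]
      symm
      rw [ENNReal.ofReal_eq_zero]
      have : cdfOf φ₂ y ≤ 0 := by
        have : ∀ z ∈ Iic y, φ₂ z = 0 := by
          intro z hz
          by_contra h
          have hz2 : z ∈ I₂ := (hpos₂ z).1 (lt_of_le_of_ne (hφ₂nn z) (Ne.symm h))
          exact absurd (mem_Iic.1 hz) (not_le.2 (hlow z hz2))
        have : cdfOf φ₂ y = ∫ z in Iic y, (0:ℝ) :=
          setIntegral_congr_fun measurableSet_Iic this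
        simp [this]
      linarith
    · -- y above I₂ : both sides are 1
      have h1 : {x | x ∈ I ∧ K x ≤ y} = I := by
        ext x
        simp only [mem_setOf_eq]
        exact ⟨fun h => h.1, fun hxI => ⟨hxI, (hhigh _ (hK x hxI).1).le⟩⟩
      rw [hbase, hset, h1]
      have hμI : μ I = 1 := by
        have h2 := measure_eq_inter hcompl univ
        rw [univ_inter] at h2
        rw [← h2, hμuniv]
      have hy1 : cdfOf φ₂ y = 1 := by
        have hzero : ∫ z in Ioi y, φ₂ z = 0 := by
          have : ∀ z ∈ Ioi y, φ₂ z = 0 := by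
            intro z hz
            by_contra h
            have hz2 : z ∈ I₂ := (hpos₂ z).1 (lt_of_le_of_ne (hφ₂nn z) (Ne.symm h))
            exact absurd (mem_Ioi.1 hz) (not_lt.2 (hhigh z hz2).le)
          rw [setIntegral_congr_fun measurableSet_Ioi this]
          simp
        have hsplit := intervalIntegral.integral_Iic_add_Ioi (μ := volume) (f := φ₂) (b := y)
          hφ₂i.integrableOn hφ₂i.integrableOn
        rw [hφ₂1] at hsplit
        have : cdfOf φ₂ y = ∫ z in Iic y, φ₂ z := rfl
        rw [this]
        linarith
      rw [hμI, hμ2def, mu_Iic hφ₂nn hφ₂i, hy1, ENNReal.ofReal_one]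
end Map

noncomputable def WU (φ₂ q : ℝ → ℝ) (c : ℝ) : ℝ≥0∞ :=
  ∫⁻ y, {y' | c < cdfOf φ₂ y'}.indicator (fun y' => ENNReal.ofReal (q y' / φ₂ y')) y
    ∂(volume.withDensity fun y' => ENNReal.ofReal (φ₂ y'))

noncomputable def WL (φ₂ q : ℝ → ℝ) (c : ℝ) : ℝ≥0∞ :=
  ∫⁻ y, {y' | cdfOf φ₂ y' < c}.indicator (fun y' => ENNReal.ofReal (q y' / φ₂ y')) y
    ∂(volume.withDensity fun y' => ENNReal.ofReal (φ₂ y'))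

lemma WU_antitone (φ₂ q : ℝ → ℝ) {c c' : ℝ} (h : c ≤ c') : WU φ₂ q c' ≤ WU φ₂ q c := by
  apply lintegral_mono
  intro y
  apply Set.indicator_le_indicator_of_subset
  · intro z hz; exact lt_of_le_of_lt h hz
  · intro z; exact zero_le

lemma WL_mono (φ₂ q : ℝ → ℝ) {c c' : ℝ} (h : c ≤ c') : WL φ₂ q c ≤ WL φ₂ q c' := by
  apply lintegral_mono
  intro y
  apply Set.indicator_le_indicator_of_subset
  · intro z hz; exact lt_of_lt_of_le hz h
  · intro z; exact zero_le

section CV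
variable {φ₂ φ q : ℝ → ℝ} {I₂ I : Set ℝ} {K : ℝ → ℝ}

lemma change_var
    (hφc : Continuous φ)
    (hφnn : ∀ x, 0 ≤ φ x) (hpos : ∀ x, 0 < φ x ↔ x ∈ I) (hIo : IsOpen I)
    {g : ℝ → ℝ} (hg : Measurable g) (hgK : EqOn K g I)
    (hmap : (volume.withDensity fun x => ENNReal.ofReal (φ x)).map g
      = volume.withDensity fun y => ENNReal.ofReal (φ₂ y))
    {H : ℝ → ℝ≥0∞}
    (hH : AEMeasurable H (volume.withDensity fun y => ENNReal.ofReal (φ₂ y))) :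
    ∫⁻ x in I, H (K x) * ENNReal.ofReal (φ x)
      = ∫⁻ y, H y ∂(volume.withDensity fun y => ENNReal.ofReal (φ₂ y)) := by
  set μ := volume.withDensity fun x => ENNReal.ofReal (φ x) with hμdef
  have hHg : AEMeasurable (fun x => H (g x)) μ := by
    apply AEMeasurable.comp_aemeasurable (f := g) (g := H) _ hg.aemeasurable
    rw [hmap]; exact hH
  have h1 : ∫⁻ y, H y ∂(volume.withDensity fun y => ENNReal.ofReal (φ₂ y))
      = ∫⁻ x, H (g x) ∂μ := by
    rw [← hmap, lintegral_map' (by rw [hmap]; exact hH) hg.aemeasurable]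
  have h2 : ∫⁻ x, H (g x) ∂μ
      = ∫⁻ x, ENNReal.ofReal (φ x) * H (g x) ∂volume := by
    rw [hμdef, lintegral_withDensity_eq_lintegral_mul₀'
      hφc.measurable.ennreal_ofReal.aemeasurable hHg]
    rfl
  have h3 : ∫⁻ x, ENNReal.ofReal (φ x) * H (g x) ∂volume
      = ∫⁻ x in I, ENNReal.ofReal (φ x) * H (g x) ∂volume := by
    rw [← lintegral_indicator hIo.measurableSet]
    apply lintegral_congr
    intro x
    by_cases hx : x ∈ I
    · rw [Set.indicator_of_mem hx]
    · rw [Set.indicator_of_notMem hx]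
      have : φ x = 0 := by
        by_contra h
        exact hx ((hpos x).1 (lt_of_le_of_ne (hφnn x) (Ne.symm h)))
      simp [this]
  have h4 : ∫⁻ x in I, ENNReal.ofReal (φ x) * H (g x) ∂volume
      = ∫⁻ x in I, H (K x) * ENNReal.ofReal (φ x) ∂volume := by
    apply setLIntegral_congr_fun hIo.measurableSet
    intro x hx
    beta_reduce
    rw [hgK hx, mul_comm]
  rw [h1, h2, h3, h4]

lemma tail_repr_upper
    (hφ₂c : Continuous φ₂) (hφ₂nn : ∀ x, 0 ≤ φ₂ x)
    (hφ₂i : Integrable φ₂)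
    (hqnn : ∀ y, 0 ≤ q y) (hqi : Integrable q)
    (hφc : Continuous φ) (hφnn : ∀ x, 0 ≤ φ x)
    (hφi : Integrable φ)
    (hIo : IsOpen I) (hpos : ∀ x, 0 < φ x ↔ x ∈ I)
    (hK : ∀ x ∈ I, K x ∈ I₂ ∧ cdfOf φ₂ (K x) = cdfOf φ x)
    {g : ℝ → ℝ} (hg : Measurable g) (hgK : EqOn K g I)
    (hmap : (volume.withDensity fun x => ENNReal.ofReal (φ x)).map g
      = volume.withDensity fun y => ENNReal.ofReal (φ₂ y))
    (t : ℝ) :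
    ∫⁻ x in I ∩ Ioi t, ENNReal.ofReal (φ x * (q (K x) / φ₂ (K x)))
      = WU φ₂ q (cdfOf φ t) := by
  set c := cdfOf φ t with hc
  set H := {y' | c < cdfOf φ₂ y'}.indicator (fun y' => ENNReal.ofReal (q y' / φ₂ y')) with hH
  have hHmeas : AEMeasurable H (volume.withDensity fun y => ENNReal.ofReal (φ₂ y)) := by
    apply AEMeasurable.indicator
    · exact ((hqi.aemeasurable.mono_ac
        (withDensity_absolutelyContinuous _ _)).div
        hφ₂c.measurable.aemeasurable).ennreal_ofReal
    · exact measurableSet_lt measurable_const (cdf_mono hφ₂nn hφ₂i).measurable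
  have hcv := change_var hφc hφnn hpos hIo hg hgK hmap hHmeas
  have hstep : ∫⁻ x in I, H (K x) * ENNReal.ofReal (φ x)
      = ∫⁻ x in I, (Ioi t).indicator
        (fun x => ENNReal.ofReal (φ x * (q (K x) / φ₂ (K x)))) x := by
    apply setLIntegral_congr_fun hIo.measurableSet
    intro x hx
    beta_reduce
    have hiff : c < cdfOf φ₂ (K x) ↔ t < x := by
      rw [(hK x hx).2, hc]
      exact (cdf_lt_iff_left hφc hφi hφnn hIo hpos hx).symm
    by_cases hxt : t < x
    · rw [Set.indicator_of_mem (mem_Ioi.2 hxt), hH,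
        Set.indicator_of_mem (by exact hiff.2 hxt),
        ENNReal.ofReal_mul (hφnn x), mul_comm]
    · rw [Set.indicator_of_notMem (by simpa using hxt), hH,
        Set.indicator_of_notMem (by intro hmem; exact hxt (hiff.1 hmem)), zero_mul]
  have hind : ∫⁻ x in I, (Ioi t).indicator
        (fun x => ENNReal.ofReal (φ x * (q (K x) / φ₂ (K x)))) x
      = ∫⁻ x in I ∩ Ioi t, ENNReal.ofReal (φ x * (q (K x) / φ₂ (K x))) := by
    rw [lintegral_indicator measurableSet_Ioi, Measure.restrict_restrict measurableSet_Ioi,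
      inter_comm]
  rw [← hind, ← hstep, hcv]
  rfl
lemma tail_repr_lower
    (hφ₂c : Continuous φ₂) (hφ₂nn : ∀ x, 0 ≤ φ₂ x)
    (hφ₂i : Integrable φ₂)
    (hqnn : ∀ y, 0 ≤ q y) (hqi : Integrable q)
    (hφc : Continuous φ) (hφnn : ∀ x, 0 ≤ φ x)
    (hφi : Integrable φ)
    (hIo : IsOpen I) (hpos : ∀ x, 0 < φ x ↔ x ∈ I)
    (hK : ∀ x ∈ I, K x ∈ I₂ ∧ cdfOf φ₂ (K x) = cdfOf φ x)
    {g : ℝ → ℝ} (hg : Measurable g) (hgK : EqOn K g I)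
    (hmap : (volume.withDensity fun x => ENNReal.ofReal (φ x)).map g
      = volume.withDensity fun y => ENNReal.ofReal (φ₂ y))
    (t : ℝ) :
    ∫⁻ x in I ∩ Iio t, ENNReal.ofReal (φ x * (q (K x) / φ₂ (K x)))
      = WL φ₂ q (cdfOf φ t) := by
  set c := cdfOf φ t with hc
  set H := {y' | cdfOf φ₂ y' < c}.indicator (fun y' => ENNReal.ofReal (q y' / φ₂ y')) with hH
  have hHmeas : AEMeasurable H (volume.withDensity fun y => ENNReal.ofReal (φ₂ y)) := by
    apply AEMeasurable.indicator
    · exact ((hqi.aemeasurable.mono_ac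
        (withDensity_absolutelyContinuous _ _)).div
        hφ₂c.measurable.aemeasurable).ennreal_ofReal
    · exact measurableSet_lt (cdf_mono hφ₂nn hφ₂i).measurable measurable_const
  have hcv := change_var hφc hφnn hpos hIo hg hgK hmap hHmeas
  have hstep : ∫⁻ x in I, H (K x) * ENNReal.ofReal (φ x)
      = ∫⁻ x in I, (Iio t).indicator
        (fun x => ENNReal.ofReal (φ x * (q (K x) / φ₂ (K x)))) x := by
    apply setLIntegral_congr_fun hIo.measurableSet
    intro x hx
    beta_reduce
    have hiff : cdfOf φ₂ (K x) < c ↔ x < t := by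
      rw [(hK x hx).2, hc]
      exact (cdf_lt_iff_right hφc hφi hφnn hIo hpos hx).symm
    by_cases hxt : x < t
    · rw [Set.indicator_of_mem (mem_Iio.2 hxt), hH,
        Set.indicator_of_mem (by exact hiff.2 hxt),
        ENNReal.ofReal_mul (hφnn x), mul_comm]
    · rw [Set.indicator_of_notMem (by simpa using hxt), hH,
        Set.indicator_of_notMem (by intro hmem; exact hxt (hiff.1 hmem)), zero_mul]
  have hind : ∫⁻ x in I, (Iio t).indicator
        (fun x => ENNReal.ofReal (φ x * (q (K x) / φ₂ (K x)))) x
      = ∫⁻ x in I ∩ Iio t, ENNReal.ofReal (φ x * (q (K x) / φ₂ (K x))) := by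
    rw [lintegral_indicator measurableSet_Iio, Measure.restrict_restrict measurableSet_Iio,
      inter_comm]
  rw [← hind, ← hstep, hcv]
  rfl


lemma side_repr
    (hφ₂c : Continuous φ₂) (hφ₂nn : ∀ x, 0 ≤ φ₂ x)
    (hφ₂i : Integrable φ₂) (hφ₂1 : ∫ x, φ₂ x = 1)
    (hI₂o : IsOpen I₂) (hI₂conn : I₂.OrdConnected)
    (hpos₂ : ∀ x, 0 < φ₂ x ↔ x ∈ I₂)
    (hqnn : ∀ y, 0 ≤ q y) (hqi : Integrable q)
    (hφc : Continuous φ) (hφnn : ∀ x, 0 ≤ φ x)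
    (hφi : Integrable φ) (hφ1 : ∫ x, φ x = 1)
    (hIo : IsOpen I) (hIconn : I.OrdConnected)
    (hpos : ∀ x, 0 < φ x ↔ x ∈ I)
    (hK : ∀ x ∈ I, K x ∈ I₂ ∧ cdfOf φ₂ (K x) = cdfOf φ x)
    (hint : IntegrableOn (fun x => x * (φ x / φ₂ (K x)) * q (K x)) I) :
    (∫ x in I, x * (φ x / φ₂ (K x)) * q (K x))
      = (∫⁻ t in Ioi (0:ℝ), WU φ₂ q (cdfOf φ t)).toReal
        - (∫⁻ t in Ioi (0:ℝ), WL φ₂ q (cdfOf φ (-t))).toReal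
    ∧ (∫⁻ t in Ioi (0:ℝ), WU φ₂ q (cdfOf φ t)) ≠ ⊤
    ∧ (∫⁻ t in Ioi (0:ℝ), WL φ₂ q (cdfOf φ (-t))) ≠ ⊤ := by
  classical
  set f : ℝ → ℝ := fun x => x * (φ x / φ₂ (K x)) * q (K x) with hf
  set h : ℝ → ℝ := fun x => φ x * (q (K x) / φ₂ (K x)) with hh
  have hfh : ∀ x, f x = x * h x := by intro x; rw [hf, hh]; ring
  have hIm : MeasurableSet I := hIo.measurableSet
  -- K is monotone on I
  have hmono : MonotoneOn K I := by
    intro x hx x' hx' hle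
    rcases eq_or_lt_of_le hle with rfl | hlt
    · exact le_rfl
    have hF : cdfOf φ x < cdfOf φ x' := cdf_lt_right hφc hφi hφnn hIo hpos hx hlt
    by_contra hcon
    push_neg at hcon
    have : cdfOf φ₂ (K x') ≤ cdfOf φ₂ (K x) := cdf_mono hφ₂nn hφ₂i hcon.le
    rw [(hK x hx).2, (hK x' hx').2] at this
    linarith
  obtain ⟨g, hg, hgK⟩ := exists_measurable_ext hmono hIconn hIm
  have hmap := map_eq hφ₂c hφ₂nn hφ₂i hφ₂1 hI₂o hI₂conn hpos₂ hφc hφnn hφi hφ1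
    hIo hIconn hpos hK hg hgK
  -- a.e.-measurability of the density ofReal ∘ h on I
  have hac : volume.restrict I ≪ volume.withDensity fun x => ENNReal.ofReal (φ x) := by
    apply Measure.AbsolutelyContinuous.mk
    intro s hs h0
    rw [withDensity_apply _ hs] at h0
    have hae : ∀ᵐ x ∂volume, x ∈ s → ENNReal.ofReal (φ x) = 0 :=
      (ae_restrict_iff' hs).1 ((lintegral_eq_zero_iff hφc.measurable.ennreal_ofReal).1 h0)
    rw [Measure.restrict_apply' hIm]
    have hsub : s ∩ I ⊆ {x | ¬(x ∈ s → ENNReal.ofReal (φ x) = 0)} := by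
      rintro x ⟨hxs, hxI⟩
      intro himp
      have h1 := himp hxs
      rw [ENNReal.ofReal_eq_zero] at h1
      exact absurd ((hpos x).2 hxI) (not_lt.2 h1)
    exact measure_mono_null hsub hae
  have hq2 : AEMeasurable (fun y => ENNReal.ofReal (q y / φ₂ y))
      (volume.withDensity fun y => ENNReal.ofReal (φ₂ y)) :=
    ((hqi.aemeasurable.mono_ac (withDensity_absolutelyContinuous _ _)).div
      hφ₂c.measurable.aemeasurable).ennreal_ofReal
  have hcomp : AEMeasurable (fun x => ENNReal.ofReal (q (g x) / φ₂ (g x)))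
      (volume.withDensity fun x => ENNReal.ofReal (φ x)) := by
    apply AEMeasurable.comp_aemeasurable (g := fun y => ENNReal.ofReal (q y / φ₂ y)) _
      hg.aemeasurable
    rw [hmap]; exact hq2
  have hAE : AEMeasurable (fun x => ENNReal.ofReal (h x)) (volume.restrict I) := by
    have h1 : AEMeasurable (fun x => ENNReal.ofReal (q (g x) / φ₂ (g x)))
        (volume.restrict I) := hcomp.mono_ac hac
    have h2 : AEMeasurable
        (fun x => ENNReal.ofReal (φ x) * ENNReal.ofReal (q (g x) / φ₂ (g x)))
        (volume.restrict I) := hφc.measurable.ennreal_ofReal.aemeasurable.mul h1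
    apply h2.congr
    apply (ae_restrict_iff' hIm).2
    apply Eventually.of_forall
    intro x hx
    simp only [hh]
    rw [← hgK hx, ENNReal.ofReal_mul (hφnn x)]
  set u : ℝ → ℝ≥0∞ := hAE.mk _ with hu_def
  have hu : Measurable u := hAE.measurable_mk
  have huae : (fun x => ENNReal.ofReal (h x)) =ᵐ[volume.restrict I] u := hAE.ae_eq_mk
  have hmIp : MeasurableSet (I ∩ Ioi (0:ℝ)) := hIm.inter measurableSet_Ioi
  have hmIn : MeasurableSet (I ∩ Iio (0:ℝ)) := hIm.inter measurableSet_Iio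
  -- positive part via layer cake
  have hPos : ∫⁻ x in I ∩ Ioi (0:ℝ), ENNReal.ofReal (f x)
      = ∫⁻ t in Ioi (0:ℝ), WU φ₂ q (cdfOf φ t) := by
    set ρ := (volume.restrict (I ∩ Ioi (0:ℝ))).withDensity u with hρ
    have huae' : (fun x => ENNReal.ofReal (h x)) =ᵐ[volume.restrict (I ∩ Ioi (0:ℝ))] u :=
      ae_restrict_of_ae_restrict_of_subset inter_subset_left huae
    have hstep1 : ∫⁻ x in I ∩ Ioi (0:ℝ), ENNReal.ofReal (f x)
        = ∫⁻ x in I ∩ Ioi (0:ℝ), ENNReal.ofReal x * u x := by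
      have e1 : ∫⁻ x in I ∩ Ioi (0:ℝ), ENNReal.ofReal (f x)
          = ∫⁻ x in I ∩ Ioi (0:ℝ), ENNReal.ofReal x * ENNReal.ofReal (h x) := by
        apply setLIntegral_congr_fun hmIp
        intro x hx
        beta_reduce
        rw [hfh x, ENNReal.ofReal_mul (le_of_lt (mem_Ioi.1 hx.2))]
      rw [e1]
      apply lintegral_congr_ae
      filter_upwards [huae'] with x hx
      rw [hx]
    have hstep2 : ∫⁻ x in I ∩ Ioi (0:ℝ), ENNReal.ofReal x * u x
        = ∫⁻ x, ENNReal.ofReal x ∂ρ := by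
      rw [hρ]
      exact ((lintegral_withDensity_eq_lintegral_mul _ hu
        (measurable_id.ennreal_ofReal : Measurable (fun x : ℝ => ENNReal.ofReal x))).trans
        (lintegral_congr fun x => mul_comm _ _)).symm
    have hnn : 0 ≤ᵐ[ρ] (fun x : ℝ => x) := by
      have hz : ρ (Iio (0:ℝ)) = 0 := by
        rw [hρ, withDensity_apply _ measurableSet_Iio,
          Measure.restrict_restrict measurableSet_Iio]
        have he : Iio (0:ℝ) ∩ (I ∩ Ioi 0) = ∅ := by
          ext x
          simp only [mem_inter_iff, mem_Iio, mem_Ioi, mem_empty_iff_false, iff_false]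
          rintro ⟨h1, _, h3⟩
          linarith
        rw [he, Measure.restrict_empty, lintegral_zero_measure]
      rw [Filter.EventuallyLE, ae_iff]
      apply measure_mono_null _ hz
      intro x hx
      simp only [mem_setOf_eq, Pi.zero_apply, not_le] at hx
      exact hx
    have hlc := lintegral_eq_lintegral_meas_lt ρ (f := fun x : ℝ => x) hnn aemeasurable_id
    have hstep3 : ∫⁻ t in Ioi (0:ℝ), ρ {a | t < a} = ∫⁻ t in Ioi (0:ℝ), WU φ₂ q (cdfOf φ t) := by
      apply setLIntegral_congr_fun measurableSet_Ioi
      intro t ht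
      beta_reduce
      have h1 : {a : ℝ | t < a} = Ioi t := rfl
      rw [h1, hρ, withDensity_apply _ measurableSet_Ioi,
        Measure.restrict_restrict measurableSet_Ioi]
      have h2 : Ioi t ∩ (I ∩ Ioi (0:ℝ)) = I ∩ Ioi t := by
        ext x
        constructor
        · rintro ⟨hx1, hx2, _⟩
          exact ⟨hx2, hx1⟩
        · rintro ⟨hx1, hx2⟩
          exact ⟨hx2, hx1, lt_trans (mem_Ioi.1 ht) hx2⟩
      rw [h2]
      have h3 : ∫⁻ x in I ∩ Ioi t, u x = ∫⁻ x in I ∩ Ioi t, ENNReal.ofReal (h x) := by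
        apply lintegral_congr_ae
        filter_upwards [ae_restrict_of_ae_restrict_of_subset inter_subset_left huae] with x hx
        rw [hx]
      rw [h3]
      exact tail_repr_upper hφ₂c hφ₂nn hφ₂i hqnn hqi hφc hφnn hφi hIo hpos hK hg hgK hmap t
    rw [hstep1, hstep2, hlc, hstep3]
  -- negative part via layer cake
  have hNeg : ∫⁻ x in I ∩ Iio (0:ℝ), ENNReal.ofReal (-(f x))
      = ∫⁻ t in Ioi (0:ℝ), WL φ₂ q (cdfOf φ (-t)) := by
    set ρ := (volume.restrict (I ∩ Iio (0:ℝ))).withDensity u with hρ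
    have huae' : (fun x => ENNReal.ofReal (h x)) =ᵐ[volume.restrict (I ∩ Iio (0:ℝ))] u :=
      ae_restrict_of_ae_restrict_of_subset inter_subset_left huae
    have hstep1 : ∫⁻ x in I ∩ Iio (0:ℝ), ENNReal.ofReal (-(f x))
        = ∫⁻ x in I ∩ Iio (0:ℝ), ENNReal.ofReal (-x) * u x := by
      have e1 : ∫⁻ x in I ∩ Iio (0:ℝ), ENNReal.ofReal (-(f x))
          = ∫⁻ x in I ∩ Iio (0:ℝ), ENNReal.ofReal (-x) * ENNReal.ofReal (h x) := by
        apply setLIntegral_congr_fun hmIn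
        intro x hx
        beta_reduce
        have : -(f x) = (-x) * h x := by rw [hfh x]; ring
        rw [this, ENNReal.ofReal_mul (by linarith [mem_Iio.1 hx.2] : (0:ℝ) ≤ -x)]
      rw [e1]
      apply lintegral_congr_ae
      filter_upwards [huae'] with x hx
      rw [hx]
    have hstep2 : ∫⁻ x in I ∩ Iio (0:ℝ), ENNReal.ofReal (-x) * u x
        = ∫⁻ x, ENNReal.ofReal (-x) ∂ρ := by
      rw [hρ]
      exact ((lintegral_withDensity_eq_lintegral_mul _ hu
        (measurable_id.neg.ennreal_ofReal : Measurable (fun x : ℝ => ENNReal.ofReal (-x)))).trans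
        (lintegral_congr fun x => mul_comm _ _)).symm
    have hnn : 0 ≤ᵐ[ρ] (fun x : ℝ => -x) := by
      have hz : ρ (Ioi (0:ℝ)) = 0 := by
        rw [hρ, withDensity_apply _ measurableSet_Ioi,
          Measure.restrict_restrict measurableSet_Ioi]
        have he : Ioi (0:ℝ) ∩ (I ∩ Iio 0) = ∅ := by
          ext x
          simp only [mem_inter_iff, mem_Iio, mem_Ioi, mem_empty_iff_false, iff_false]
          rintro ⟨h1, _, h3⟩
          linarith
        rw [he, Measure.restrict_empty, lintegral_zero_measure]
      rw [Filter.EventuallyLE, ae_iff]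
      apply measure_mono_null _ hz
      intro x hx
      simp only [mem_setOf_eq, Pi.zero_apply, not_le] at hx
      simp only [mem_Ioi]
      linarith
    have hlc := lintegral_eq_lintegral_meas_lt ρ (f := fun x : ℝ => -x) hnn
      measurable_id.neg.aemeasurable
    have hstep3 : ∫⁻ t in Ioi (0:ℝ), ρ {a | t < -a}
        = ∫⁻ t in Ioi (0:ℝ), WL φ₂ q (cdfOf φ (-t)) := by
      apply setLIntegral_congr_fun measurableSet_Ioi
      intro t ht
      beta_reduce
      have h1 : {a : ℝ | t < -a} = Iio (-t) := by
        ext a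
        simp only [mem_setOf_eq, mem_Iio]
        constructor
        · intro h'; linarith
        · intro h'; linarith
      rw [h1, hρ, withDensity_apply _ measurableSet_Iio,
        Measure.restrict_restrict measurableSet_Iio]
      have h2 : Iio (-t) ∩ (I ∩ Iio (0:ℝ)) = I ∩ Iio (-t) := by
        ext x
        constructor
        · rintro ⟨hx1, hx2, _⟩
          exact ⟨hx2, hx1⟩
        · rintro ⟨hx1, hx2⟩
          have ht' := mem_Ioi.1 ht
          exact ⟨hx2, hx1, by have := mem_Iio.1 hx2; simp only [mem_Iio]; linarith⟩
      rw [h2]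
      have h3 : ∫⁻ x in I ∩ Iio (-t), u x = ∫⁻ x in I ∩ Iio (-t), ENNReal.ofReal (h x) := by
        apply lintegral_congr_ae
        filter_upwards [ae_restrict_of_ae_restrict_of_subset inter_subset_left huae] with x hx
        rw [hx]
      rw [h3]
      exact tail_repr_lower hφ₂c hφ₂nn hφ₂i hqnn hqi hφc hφnn hφi hIo hpos hK hg hgK hmap (-t)
    rw [hstep1, hstep2, hlc, hstep3]
  -- finiteness
  have hfin1 : (∫⁻ t in Ioi (0:ℝ), WU φ₂ q (cdfOf φ t)) ≠ ⊤ := by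
    rw [← hPos]
    have h1 : ∫⁻ x in I ∩ Ioi (0:ℝ), ENNReal.ofReal (f x)
        ≤ ∫⁻ x in I, (‖f x‖₊ : ℝ≥0∞) :=
      le_trans (lintegral_mono_set inter_subset_left)
        (lintegral_mono fun x => Real.ofReal_le_enorm _)
    exact ne_top_of_le_ne_top hint.2.ne h1
  have hfin2 : (∫⁻ t in Ioi (0:ℝ), WL φ₂ q (cdfOf φ (-t))) ≠ ⊤ := by
    rw [← hNeg]
    have h1 : ∫⁻ x in I ∩ Iio (0:ℝ), ENNReal.ofReal (-(f x))
        ≤ ∫⁻ x in I, (‖f x‖₊ : ℝ≥0∞) := by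
      refine le_trans (lintegral_mono_set inter_subset_left) (lintegral_mono fun x => ?_)
      calc ENNReal.ofReal (-(f x)) ≤ (‖-(f x)‖₊ : ℝ≥0∞) := Real.ofReal_le_enorm _
        _ = (‖f x‖₊ : ℝ≥0∞) := by rw [nnnorm_neg]
    exact ne_top_of_le_ne_top hint.2.ne h1
  -- split the integral
  have hd : Disjoint (I ∩ Iio (0:ℝ)) (I ∩ Ici (0:ℝ)) :=
    Disjoint.mono inter_subset_right inter_subset_right (Iio_disjoint_Ici le_rfl)
  have hsplit : ∫ x in I, f x
      = (∫ x in I ∩ Iio (0:ℝ), f x) + ∫ x in I ∩ Ici (0:ℝ), f x := by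
    rw [← setIntegral_union hd (hIm.inter measurableSet_Ici)
      (hint.mono_set inter_subset_left) (hint.mono_set inter_subset_left)]
    rw [← inter_union_distrib_left, Iio_union_Ici, inter_univ]
  -- positive piece
  have hre : volume.restrict (I ∩ Ici (0:ℝ)) = volume.restrict (I ∩ Ioi (0:ℝ)) := by
    apply Measure.restrict_congr_set
    exact (Filter.EventuallyEq.refl _ _).inter (Ioi_ae_eq_Ici (μ := volume) (a := (0:ℝ))).symm
  have hpos_eq : ∫ x in I ∩ Ici (0:ℝ), f x
      = (∫⁻ t in Ioi (0:ℝ), WU φ₂ q (cdfOf φ t)).toReal := by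
    rw [← hPos]
    have hi : IntegrableOn f (I ∩ Ioi (0:ℝ)) := hint.mono_set inter_subset_left
    have hfnn : 0 ≤ᵐ[volume.restrict (I ∩ Ioi (0:ℝ))] f := by
      apply (ae_restrict_iff' hmIp).2
      apply Eventually.of_forall
      intro x hx
      rw [hf]
      exact mul_nonneg (mul_nonneg (le_of_lt (mem_Ioi.1 hx.2))
        (div_nonneg (hφnn x) (hφ₂nn _))) (hqnn _)
    rw [show (∫ x in I ∩ Ici (0:ℝ), f x) = ∫ x in I ∩ Ioi (0:ℝ), f x by rw [hre]]
    exact integral_eq_lintegral_of_nonneg_ae hfnn hi.aestronglyMeasurable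
  -- negative piece
  have hneg_eq : ∫ x in I ∩ Iio (0:ℝ), f x
      = -(∫⁻ t in Ioi (0:ℝ), WL φ₂ q (cdfOf φ (-t))).toReal := by
    rw [← hNeg]
    have hi : IntegrableOn f (I ∩ Iio (0:ℝ)) := hint.mono_set inter_subset_left
    have hfnn : 0 ≤ᵐ[volume.restrict (I ∩ Iio (0:ℝ))] (fun x => -(f x)) := by
      apply (ae_restrict_iff' hmIn).2
      apply Eventually.of_forall
      intro x hx
      have hfx : f x ≤ 0 := by
        rw [hf]
        exact mul_nonpos_of_nonpos_of_nonneg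
          (mul_nonpos_of_nonpos_of_nonneg (le_of_lt (mem_Iio.1 hx.2))
            (div_nonneg (hφnn x) (hφ₂nn _))) (hqnn _)
      simpa using hfx
    have h2 := integral_eq_lintegral_of_nonneg_ae hfnn hi.neg.aestronglyMeasurable
    have h3 : ∫ x in I ∩ Iio (0:ℝ), f x = -∫ x in I ∩ Iio (0:ℝ), -(f x) := by
      rw [integral_neg, neg_neg]
    rw [h3, h2]
  refine ⟨?_, hfin1, hfin2⟩
  rw [hsplit, hpos_eq, hneg_eq]
  ring

end CV

/-- Monotonicity w.r.t. first-order stochastic dominance: with cash-flow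
densities `φa`, `φb` (continuous, positive exactly on open intervals `Ia`, `Ib`) whose
CDFs satisfy `Fa ≥ Fb` pointwise, and with finite portfolio values, one has
`V(φa) ≤ V(φb)`. -/
theorem stmt5
    (φ₂ q φa φb : ℝ → ℝ) (I₂ Ia Ib : Set ℝ)
    (hφ₂c : Continuous φ₂) (hφ₂nn : ∀ x, 0 ≤ φ₂ x)
    (hφ₂i : Integrable φ₂) (hφ₂1 : ∫ x, φ₂ x = 1)
    (hI₂o : IsOpen I₂) (hI₂conn : I₂.OrdConnected)
    (hpos₂ : ∀ x, 0 < φ₂ x ↔ x ∈ I₂)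
    (hqnn : ∀ y, 0 ≤ q y) (hqi : Integrable q)
    (hφac : Continuous φa) (hφann : ∀ x, 0 ≤ φa x)
    (hφai : Integrable φa) (hφa1 : ∫ x, φa x = 1)
    (hIao : IsOpen Ia) (hIaconn : Ia.OrdConnected)
    (hposa : ∀ x, 0 < φa x ↔ x ∈ Ia)
    (hφbc : Continuous φb) (hφbnn : ∀ x, 0 ≤ φb x)
    (hφbi : Integrable φb) (hφb1 : ∫ x, φb x = 1)
    (hIbo : IsOpen Ib) (hIbconn : Ib.OrdConnected)
    (hposb : ∀ x, 0 < φb x ↔ x ∈ Ib)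
    (Ka Kb : ℝ → ℝ)
    (hKa : ∀ x ∈ Ia, Ka x ∈ I₂ ∧ cdfOf φ₂ (Ka x) = cdfOf φa x)
    (hKb : ∀ x ∈ Ib, Kb x ∈ I₂ ∧ cdfOf φ₂ (Kb x) = cdfOf φb x)
    (hdom : ∀ t, cdfOf φb t ≤ cdfOf φa t)
    (hinta : IntegrableOn (fun x => x * (φa x / φ₂ (Ka x)) * q (Ka x)) Ia)
    (hintb : IntegrableOn (fun x => x * (φb x / φ₂ (Kb x)) * q (Kb x)) Ib) :
    (∫ x in Ia, x * (φa x / φ₂ (Ka x)) * q (Ka x))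
      ≤ ∫ x in Ib, x * (φb x / φ₂ (Kb x)) * q (Kb x) := by
  obtain ⟨hVa, hfinUa, hfinLa⟩ := side_repr hφ₂c hφ₂nn hφ₂i hφ₂1 hI₂o hI₂conn hpos₂
    hqnn hqi hφac hφann hφai hφa1 hIao hIaconn hposa hKa hinta
  obtain ⟨hVb, hfinUb, hfinLb⟩ := side_repr hφ₂c hφ₂nn hφ₂i hφ₂1 hI₂o hI₂conn hpos₂
    hqnn hqi hφbc hφbnn hφbi hφb1 hIbo hIbconn hposb hKb hintb
  rw [hVa, hVb]
  have hU : (∫⁻ t in Ioi (0:ℝ), WU φ₂ q (cdfOf φa t))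
      ≤ ∫⁻ t in Ioi (0:ℝ), WU φ₂ q (cdfOf φb t) :=
    lintegral_mono fun t => WU_antitone φ₂ q (hdom t)
  have hL : (∫⁻ t in Ioi (0:ℝ), WL φ₂ q (cdfOf φb (-t)))
      ≤ ∫⁻ t in Ioi (0:ℝ), WL φ₂ q (cdfOf φa (-t)) :=
    lintegral_mono fun t => WL_mono φ₂ q (hdom (-t))
  have h1 := ENNReal.toReal_mono hfinUb hU
  have h2 := ENNReal.toReal_mono hfinLa hL
  linarith
end

section
/- Modigliani–Miller separation: under the benchmark setup, let φ₀ be a cash-flow density continuous and positive exactly on an open interval I₀ ⊆ (0,∞) with binding map K₀ := F₂⁻¹ ∘ F₀ and finite portfolio value V(φ₀), and let a > 0. Define the shifted density φ(x) := φ₀(x − a), whose binding map is K(x) = K₀(x − a). Then the portfolio value of the shifted cash flow satisfies ∫ x · (φ(x)/φ₂(K(x))) · q(K(x)) dx = a · ∫_{I₂} q(y) dy + V(φ₀); that is, adding a risk-free amount a adds a times the bond price B = ∫_{I₂} q(y) dy to the value. -/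
open MeasureTheory Set Filter Topology

lemma cdfOf_sub {φ : ℝ → ℝ} (hi : Integrable φ) (a b : ℝ) :
    cdfOf φ b - cdfOf φ a = ∫ t in a..b, φ t :=
  intervalIntegral.integral_Iic_sub_Iic hi.integrableOn hi.integrableOn

lemma hasDerivAt_cdfOf {φ : ℝ → ℝ} (hc : Continuous φ) (hi : Integrable φ) (x : ℝ) :
    HasDerivAt (cdfOf φ) (φ x) x := by
  have h : HasDerivAt (fun u => cdfOf φ 0 + ∫ t in (0:ℝ)..u, φ t) (φ x) x :=
    (intervalIntegral.integral_hasDerivAt_right hi.intervalIntegrable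
      (hc.stronglyMeasurable.stronglyMeasurableAtFilter)
      hc.continuousAt).const_add _
  have heq : cdfOf φ = fun u => cdfOf φ 0 + ∫ t in (0:ℝ)..u, φ t := by
    funext u
    have := cdfOf_sub hi 0 u
    linarith
  rw [heq]
  exact h

lemma cdfOf_nonneg {φ : ℝ → ℝ} (hnn : ∀ x, 0 ≤ φ x) (x : ℝ) : 0 ≤ cdfOf φ x :=
  setIntegral_nonneg measurableSet_Iic fun t _ => hnn t

lemma cdfOf_le_integral {φ : ℝ → ℝ} (hnn : ∀ x, 0 ≤ φ x) (hi : Integrable φ) (x : ℝ) :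
    cdfOf φ x ≤ ∫ t, φ t :=
  setIntegral_le_integral hi (Eventually.of_forall hnn)

lemma strictMonoOn_cdfOf {φ : ℝ → ℝ} (hi : Integrable φ)
    {I : Set ℝ} (hconn : I.OrdConnected) (hpos : ∀ x ∈ I, 0 < φ x) :
    StrictMonoOn (cdfOf φ) I := by
  intro x hx y hy hxy
  have h : 0 < ∫ t in x..y, φ t := by
    apply intervalIntegral.intervalIntegral_pos_of_pos_on hi.intervalIntegrable
    · intro t ht
      exact hpos t (hconn.out hx hy ⟨le_of_lt ht.1, le_of_lt ht.2⟩)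
    · exact hxy
  have := cdfOf_sub hi x y
  linarith

lemma cdfOf_mem_Ioo {φ : ℝ → ℝ} (hnn : ∀ x, 0 ≤ φ x)
    (hi : Integrable φ) {I : Set ℝ} (hIo : IsOpen I) (hpos : ∀ x, 0 < φ x ↔ x ∈ I)
    {y : ℝ} (hy : y ∈ I) : cdfOf φ y ∈ Set.Ioo 0 (∫ x, φ x) := by
  obtain ⟨ε, hε, hball⟩ := Metric.isOpen_iff.1 hIo y hy
  have hsub : Set.Ioo (y - ε) (y + ε) ⊆ I := by
    intro t ht
    apply hball
    rw [Metric.mem_ball, Real.dist_eq, abs_lt]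
    constructor <;> [linarith [ht.1]; linarith [ht.2]]
  have hposon : ∀ t ∈ Set.Ioo (y - ε) (y + ε), 0 < φ t := fun t ht => (hpos t).2 (hsub ht)
  have h1 : 0 < ∫ t in (y - ε/2)..y, φ t := by
    apply intervalIntegral.intervalIntegral_pos_of_pos_on hi.intervalIntegrable
    · intro t ht; exact hposon t ⟨by linarith [ht.1], by linarith [ht.2]⟩
    · linarith
  have h2 : 0 < ∫ t in y..(y + ε/2), φ t := by
    apply intervalIntegral.intervalIntegral_pos_of_pos_on hi.intervalIntegrable
    · intro t ht; exact hposon t ⟨by linarith [ht.1], by linarith [ht.2]⟩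
    · linarith
  have e1 := cdfOf_sub hi (y - ε/2) y
  have e2 := cdfOf_sub hi y (y + ε/2)
  have l1 := cdfOf_nonneg hnn (y - ε/2)
  have l2 := cdfOf_le_integral hnn hi (y + ε/2)
  exact ⟨by linarith, by linarith⟩

lemma cdfOf_surj {φ : ℝ → ℝ} (hc : Continuous φ) (hi : Integrable φ)
    {t : ℝ} (ht0 : 0 < t) (ht1 : t < ∫ x, φ x) : ∃ x, cdfOf φ x = t := by
  have htop : Tendsto (fun n : ℕ => cdfOf φ (n : ℝ)) atTop (𝓝 (∫ x, φ x)) := by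
    have h := tendsto_setIntegral_of_monotone (f := φ) (μ := volume)
      (s := fun n : ℕ => Set.Iic (n : ℝ)) (fun n => measurableSet_Iic)
      (fun m n hmn => Iic_subset_Iic.2 (by exact_mod_cast hmn))
      (hi.integrableOn)
    have huniv : (⋃ n : ℕ, Set.Iic ((n : ℕ) : ℝ)) = Set.univ := by
      apply Set.eq_univ_of_forall
      intro x
      obtain ⟨n, hn⟩ := exists_nat_ge x
      exact Set.mem_iUnion.2 ⟨n, hn⟩
    rw [huniv] at h
    simpa [cdfOf, setIntegral_univ] using h
  have hbot : Tendsto (fun n : ℕ => cdfOf φ (-(n : ℝ))) atTop (𝓝 0) := by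
    have h := tendsto_setIntegral_of_antitone (f := φ) (μ := volume)
      (s := fun n : ℕ => Set.Iic (-(n : ℝ))) (fun n => measurableSet_Iic)
      (fun m n hmn => Iic_subset_Iic.2 (by exact_mod_cast neg_le_neg (Nat.cast_le.2 hmn)))
      ⟨0, hi.integrableOn⟩
    have hempty : (⋂ n : ℕ, Set.Iic (-((n : ℕ) : ℝ))) = ∅ := by
      apply Set.eq_empty_of_forall_notMem
      intro x hx
      obtain ⟨n, hn⟩ := exists_nat_gt (-x)
      have := Set.mem_iInter.1 hx n
      simp only [Set.mem_Iic] at this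
      linarith
    rw [hempty] at h
    simpa [cdfOf] using h
  obtain ⟨n, hn⟩ := (htop.eventually (eventually_gt_nhds ht1)).exists
  obtain ⟨m, hm⟩ := (hbot.eventually (eventually_lt_nhds ht0)).exists
  have hcont : Continuous (cdfOf φ) :=
    continuous_iff_continuousAt.2 fun x => (hasDerivAt_cdfOf hc hi x).continuousAt
  have : t ∈ Set.Icc (cdfOf φ (-(m:ℝ))) (cdfOf φ (n:ℝ)) := ⟨le_of_lt hm, le_of_lt hn⟩
  obtain ⟨x, hx⟩ := intermediate_value_univ (-(m:ℝ)) (n:ℝ) hcont this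
  exact ⟨x, hx⟩

lemma mem_of_cdfOf_eq {φ : ℝ → ℝ} (hnn : ∀ x, 0 ≤ φ x) (hi : Integrable φ)
    {I : Set ℝ} (hconn : I.OrdConnected) (hpos : ∀ x, 0 < φ x ↔ x ∈ I)
    {x t : ℝ} (hx : cdfOf φ x = t) (ht0 : 0 < t) (ht1 : t < ∫ u, φ u) : x ∈ I := by
  have hzero : ∀ u, u ∉ I → φ u = 0 := fun u hu =>
    le_antisymm (not_lt.1 fun h => hu ((hpos u).1 h)) (hnn u)
  by_cases h1 : ∃ p ∈ I, p ≤ x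
  · by_cases h2 : ∃ p ∈ I, x ≤ p
    · obtain ⟨p, hp, hpx⟩ := h1
      obtain ⟨p', hp', hxp'⟩ := h2
      exact hconn.out hp hp' ⟨hpx, hxp'⟩
    · push_neg at h2
      exfalso
      have hIsub : I ⊆ Set.Iic x := fun p hp => le_of_lt (h2 p hp)
      have hzz : ∀ u ∈ Set.Ioi x, φ u = 0 := fun u hu =>
        hzero u (fun hmem => absurd (hIsub hmem) (by rw [Set.mem_Iic, not_le]; exact Set.mem_Ioi.1 hu))
      have hcompl : ∫ u in Set.Ioi x, φ u = 0 := by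
        rw [setIntegral_congr_fun measurableSet_Ioi hzz]
        simp
      have := integral_add_compl (measurableSet_Iic (a := x)) hi
      rw [compl_Iic] at this
      have hxval : cdfOf φ x = ∫ u, φ u := by
        unfold cdfOf
        rw [← this, hcompl, add_zero]
      rw [hx] at hxval
      linarith
  · push_neg at h1
    exfalso
    have hzz : ∀ u ∈ Set.Iic x, φ u = 0 := fun u hu =>
      hzero u (fun hmem => absurd hu (not_le.2 (h1 u hmem)))
    have : cdfOf φ x = 0 := by
      unfold cdfOf
      rw [setIntegral_congr_fun measurableSet_Iic hzz]
      simp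
    rw [hx] at this
    linarith

/-- Modigliani–Miller separation: let `φ₀` be a cash-flow density positive
exactly on an open interval `I₀ ⊆ (0,∞)` with binding map `K₀` and finite portfolio value,
and let `a > 0`.  The shifted cash flow has density `x ↦ φ₀ (x − a)` and binding map
`x ↦ K₀ (x − a)`, and its portfolio value equals `a · ∫_{I₂} q + V(φ₀)`:  adding a
risk-free amount `a` adds `a` times the bond price to the value. -/
theorem stmt9
    (φ₂ q φ₀ : ℝ → ℝ) (I₂ I₀ : Set ℝ)
    (hφ₂c : Continuous φ₂) (hφ₂nn : ∀ x, 0 ≤ φ₂ x)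
    (hφ₂i : Integrable φ₂) (hφ₂1 : ∫ x, φ₂ x = 1)
    (hI₂o : IsOpen I₂) (hI₂conn : I₂.OrdConnected)
    (hpos₂ : ∀ x, 0 < φ₂ x ↔ x ∈ I₂)
    (hqnn : ∀ y, 0 ≤ q y) (hqi : Integrable q)
    (hφ₀c : Continuous φ₀) (hφ₀nn : ∀ x, 0 ≤ φ₀ x)
    (hφ₀i : Integrable φ₀) (hφ₀1 : ∫ x, φ₀ x = 1)
    (hI₀o : IsOpen I₀) (hI₀conn : I₀.OrdConnected)
    (hpos₀ : ∀ x, 0 < φ₀ x ↔ x ∈ I₀)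
    (hI₀pos : I₀ ⊆ Set.Ioi (0:ℝ))
    (K₀ : ℝ → ℝ)
    (hK₀ : ∀ x ∈ I₀, K₀ x ∈ I₂ ∧ cdfOf φ₂ (K₀ x) = cdfOf φ₀ x)
    (hint₀ : IntegrableOn (fun x => x * (φ₀ x / φ₂ (K₀ x)) * q (K₀ x)) I₀)
    (a : ℝ) (ha : 0 < a) :
    (∫ x in (fun s => s + a) '' I₀,
        x * (φ₀ (x - a) / φ₂ (K₀ (x - a))) * q (K₀ (x - a)))
      = a * (∫ y in I₂, q y) + ∫ x in I₀, x * (φ₀ x / φ₂ (K₀ x)) * q (K₀ x) := by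
  have hd₂ : ∀ y, HasDerivAt (cdfOf φ₂) (φ₂ y) y := hasDerivAt_cdfOf hφ₂c hφ₂i
  have hd₀ : ∀ x, HasDerivAt (cdfOf φ₀) (φ₀ x) x := hasDerivAt_cdfOf hφ₀c hφ₀i
  have hsm₂ : StrictMonoOn (cdfOf φ₂) I₂ :=
    strictMonoOn_cdfOf hφ₂i hI₂conn (fun x hx => (hpos₂ x).2 hx)
  have hsm₀ : StrictMonoOn (cdfOf φ₀) I₀ :=
    strictMonoOn_cdfOf hφ₀i hI₀conn (fun x hx => (hpos₀ x).2 hx)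
  -- derivative of K₀
  have hK₀deriv : ∀ x ∈ I₀, HasDerivAt K₀ (φ₀ x / φ₂ (K₀ x)) x := by
    intro x₀ hx₀
    obtain ⟨hK₀mem, hK₀eq⟩ := hK₀ x₀ hx₀
    have hφ₂pos : 0 < φ₂ (K₀ x₀) := (hpos₂ _).2 hK₀mem
    have hstrict : HasStrictDerivAt (cdfOf φ₂) (φ₂ (K₀ x₀)) (K₀ x₀) :=
      hasStrictDerivAt_of_hasDerivAt_of_continuousAt (Eventually.of_forall hd₂)
        hφ₂c.continuousAt
    have hequiv := hstrict.hasStrictFDerivAt_equiv hφ₂pos.ne'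
    obtain ⟨g, hginv, hgF, hright⟩ :
        ∃ g : ℝ → ℝ, HasStrictDerivAt g (φ₂ (K₀ x₀))⁻¹ (cdfOf φ₂ (K₀ x₀)) ∧
          g (cdfOf φ₂ (K₀ x₀)) = K₀ x₀ ∧
          (∀ᶠ y in 𝓝 (cdfOf φ₂ (K₀ x₀)), cdfOf φ₂ (g y) = y) :=
      ⟨_, hstrict.to_localInverse hφ₂pos.ne', hequiv.localInverse_apply_image,
        hequiv.eventually_right_inverse⟩
    have hgcont : ContinuousAt g (cdfOf φ₂ (K₀ x₀)) := hginv.hasDerivAt.continuousAt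
    have hcomp : HasDerivAt (fun x => g (cdfOf φ₀ x)) ((φ₂ (K₀ x₀))⁻¹ * φ₀ x₀) x₀ := by
      rw [hK₀eq] at hginv
      exact hginv.hasDerivAt.comp x₀ (hd₀ x₀)
    have hev : K₀ =ᶠ[𝓝 x₀] fun x => g (cdfOf φ₀ x) := by
      have hF₀cont : ContinuousAt (cdfOf φ₀) x₀ := (hd₀ x₀).continuousAt
      have hmemI₀ : ∀ᶠ x in 𝓝 x₀, x ∈ I₀ := eventually_of_mem (hI₀o.mem_nhds hx₀) fun x hx => hx
      have hrinv : ∀ᶠ x in 𝓝 x₀, cdfOf φ₂ (g (cdfOf φ₀ x)) = cdfOf φ₀ x := by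
        rw [hK₀eq] at hright
        exact hF₀cont.eventually hright
      have hginI₂ : ∀ᶠ x in 𝓝 x₀, g (cdfOf φ₀ x) ∈ I₂ := by
        have hcont2 : ContinuousAt (fun x => g (cdfOf φ₀ x)) x₀ := by
          rw [hK₀eq] at hgcont
          exact hgcont.comp hF₀cont
        have hval : g (cdfOf φ₀ x₀) ∈ I₂ := by
          rw [← hK₀eq, hgF]; exact hK₀mem
        exact hcont2.eventually_mem (hI₂o.mem_nhds hval)
      filter_upwards [hmemI₀, hrinv, hginI₂] with x hxI hr hg2
      obtain ⟨hKmem, hKeq⟩ := hK₀ x hxI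
      exact hsm₂.injOn hKmem hg2 (by rw [hKeq, hr])
    have := hcomp.congr_of_eventuallyEq hev
    have hrw : φ₀ x₀ / φ₂ (K₀ x₀) = (φ₂ (K₀ x₀))⁻¹ * φ₀ x₀ := by
      rw [div_eq_inv_mul]
    rw [hrw]
    exact this
  -- injectivity of K₀ on I₀
  have hK₀inj : Set.InjOn K₀ I₀ := by
    intro x hx y hy hxy
    apply hsm₀.injOn hx hy
    rw [← (hK₀ x hx).2, ← (hK₀ y hy).2, hxy]
  -- image of I₀ under K₀ is I₂
  have himg : K₀ '' I₀ = I₂ := by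
    apply Set.Subset.antisymm
    · rintro _ ⟨x, hx, rfl⟩
      exact (hK₀ x hx).1
    · intro y hy
      have ht : cdfOf φ₂ y ∈ Set.Ioo 0 (∫ x, φ₂ x) :=
        cdfOf_mem_Ioo hφ₂nn hφ₂i hI₂o hpos₂ hy
      rw [hφ₂1] at ht
      obtain ⟨x, hx⟩ := cdfOf_surj hφ₀c hφ₀i ht.1 (by rw [hφ₀1]; exact ht.2)
      have hxI : x ∈ I₀ :=
        mem_of_cdfOf_eq hφ₀nn hφ₀i hI₀conn hpos₀ hx ht.1 (by rw [hφ₀1]; exact ht.2)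
      refine ⟨x, hxI, ?_⟩
      apply hsm₂.injOn (hK₀ x hxI).1 hy
      rw [(hK₀ x hxI).2, hx]
  have hmeasI₀ : MeasurableSet I₀ := hI₀o.measurableSet
  have hderivWithin : ∀ x ∈ I₀, HasDerivWithinAt K₀ (φ₀ x / φ₂ (K₀ x)) I₀ x :=
    fun x hx => (hK₀deriv x hx).hasDerivWithinAt
  -- substitution: bond price
  have hsub : ∫ y in I₂, q y = ∫ x in I₀, |φ₀ x / φ₂ (K₀ x)| • q (K₀ x) := by
    rw [← himg]
    exact integral_image_eq_integral_abs_deriv_smul hmeasI₀ hderivWithin hK₀inj q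
  have habs : ∀ x ∈ I₀, |φ₀ x / φ₂ (K₀ x)| • q (K₀ x) = (φ₀ x / φ₂ (K₀ x)) * q (K₀ x) := by
    intro x hx
    rw [smul_eq_mul, abs_of_nonneg (div_nonneg (hφ₀nn x) (hφ₂nn _))]
  have hsub' : ∫ y in I₂, q y = ∫ x in I₀, (φ₀ x / φ₂ (K₀ x)) * q (K₀ x) := by
    rw [hsub]
    exact setIntegral_congr_fun hmeasI₀ habs
  -- integrability of the density piece
  have hci : IntegrableOn (fun x => (φ₀ x / φ₂ (K₀ x)) * q (K₀ x)) I₀ := by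
    have h := (integrableOn_image_iff_integrableOn_abs_deriv_smul hmeasI₀ hderivWithin
      hK₀inj q).1 (by rw [himg]; exact hqi.integrableOn)
    exact h.congr_fun habs hmeasI₀
  -- change of variables on the left
  have hshift : (∫ x in (fun s => s + a) '' I₀,
        x * (φ₀ (x - a) / φ₂ (K₀ (x - a))) * q (K₀ (x - a)))
      = ∫ x in I₀, (x + a) * (φ₀ x / φ₂ (K₀ x)) * q (K₀ x) := by
    have hd : ∀ x ∈ I₀, HasDerivWithinAt (fun s => s + a) (1:ℝ) I₀ x :=
      fun x _ => ((hasDerivAt_id x).add_const a).hasDerivWithinAt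
    have hinj : Set.InjOn (fun s => s + a) I₀ := fun x _ y _ h => by simpa using h
    rw [integral_image_eq_integral_abs_deriv_smul hmeasI₀ hd hinj]
    apply setIntegral_congr_fun hmeasI₀
    intro x hx
    simp [add_sub_cancel_right]
  rw [hshift]
  have hsplit : (fun x => (x + a) * (φ₀ x / φ₂ (K₀ x)) * q (K₀ x))
      = fun x => x * (φ₀ x / φ₂ (K₀ x)) * q (K₀ x) + a * ((φ₀ x / φ₂ (K₀ x)) * q (K₀ x)) := by
    funext x; ring
  rw [hsplit, integral_add hint₀ (hci.const_mul a), integral_const_mul, ← hsub']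
  ring
end
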